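/- Let $k\geq 2$ and let $g_r \in \mathbb{Z}_2[w_2,\dots,w_k]$ be defined by $g_0=1$, $g_{-1}=\cdots=g_{-k+1}=0$, and $g_r = w_2 g_{r-2} + \cdots + w_k g_{r-k}$ for $r\geq 1$. Then for every $i\geq 0$ and every $r \geq 1 + k(2^i-1)$, we have $g_r = \sum_{j=2}^k w_j^{2^i} g_{r-j\cdot 2^i}$. -/
import Mathlib


open MvPolynomial Finset

/-- For `k ≥ 2`, with `g_r ∈ ℤ₂[w₂,…,w_k]` (variable `X j` is `w_{j+2}`)
defined by `g₀ = 1`, `g_{-1} = ⋯ = g_{-k+1} = 0` and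
`g_r = w₂ g_{r-2} + ⋯ + w_k g_{r-k}` for `r ≥ 1`, we have, for every `i ≥ 0` and
every `r ≥ 1 + k(2^i - 1)`, `g_r = ∑_{j=2}^{k} w_j^{2^i} g_{r - j·2^i}`. -/

lemma sum_sum_char2 {R : Type*} [CommRing R] (h2 : (2:R) = 0) {n : ℕ}
    (f : Fin n → Fin n → R) (hsym : ∀ j l, f j l = f l j) :
    ∑ j, ∑ l, f j l = ∑ j, f j j := by
  rw [← Finset.sum_product']
  rw [← Finset.diag_union_offDiag (Finset.univ : Finset (Fin n)),
    Finset.sum_union (Finset.disjoint_diag_offDiag _)]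
  have h0 : ∑ p ∈ Finset.univ.offDiag, f p.1 p.2 = 0 := by
    apply Finset.sum_involution (fun p _ => Prod.swap p)
    · intro p hp
      rw [Prod.fst_swap, Prod.snd_swap, hsym p.2 p.1, ← two_mul, h2, zero_mul]
    · intro p hp _
      simp only [Finset.mem_offDiag] at hp
      intro h
      exact hp.2.2 (congrArg Prod.snd h.symm ▸ rfl)
    · intro p hp
      simp only [Finset.mem_offDiag] at hp ⊢
      exact ⟨Finset.mem_univ _, Finset.mem_univ _, Ne.symm hp.2.2⟩
    · intro p hp; rfl
  rw [h0, add_zero, Finset.sum_diag]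

theorem stmt_2 (k : ℕ) (hk : 2 ≤ k)
    (g : ℤ → MvPolynomial (Fin (k - 1)) (ZMod 2))
    (hneg : ∀ r : ℤ, -((k : ℤ) - 1) ≤ r → r < 0 → g r = 0)
    (h0 : g 0 = 1)
    (hrec : ∀ r : ℤ, 1 ≤ r →
      g r = ∑ j : Fin (k - 1), X j * g (r - ((j : ℤ) + 2))) :
    ∀ (i : ℕ) (r : ℤ), 1 + (k : ℤ) * (2 ^ i - 1) ≤ r →
      g r = ∑ j : Fin (k - 1), (X j) ^ (2 ^ i) * g (r - ((j : ℤ) + 2) * 2 ^ i) := by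
  have h2 : (2 : MvPolynomial (Fin (k - 1)) (ZMod 2)) = 0 := by
    have := CharP.cast_eq_zero (MvPolynomial (Fin (k - 1)) (ZMod 2)) 2
    simpa using this
  have hjb : ∀ j : Fin (k - 1), (j : ℤ) + 2 ≤ (k : ℤ) := by
    intro j
    have := j.isLt
    omega
  intro i
  induction i with
  | zero =>
    intro r hr
    simp only [pow_zero, pow_one, mul_one] at hr ⊢
    have h1 : (1:ℤ) ≤ r := by linarith
    simpa using hrec r h1
  | succ i ih =>
    intro r hr
    have h2i : (0:ℤ) < 2 ^ i := by positivity
    have hpow : (2:ℤ) ^ (i+1) = 2 ^ i * 2 := pow_succ 2 i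
    have hr1 : 1 + (k : ℤ) * (2 ^ i - 1) ≤ r := by
      have hk0 : (0:ℤ) ≤ k := by positivity
      nlinarith [pow_le_pow_right₀ (by norm_num : (1:ℤ) ≤ 2) (Nat.le_succ i)]
    have hr2 : ∀ j : Fin (k - 1),
        1 + (k : ℤ) * (2 ^ i - 1) ≤ r - ((j : ℤ) + 2) * 2 ^ i := by
      intro j
      have := hjb j
      nlinarith
    rw [ih r hr1]
    calc ∑ j : Fin (k-1), X j ^ (2^i) * g (r - ((j:ℤ)+2) * 2^i)
        = ∑ j : Fin (k-1), ∑ l : Fin (k-1),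
            (X j * X l) ^ (2^i) * g (r - ((j:ℤ)+2) * 2^i - ((l:ℤ)+2) * 2^i) := by
          refine Finset.sum_congr rfl fun j _ => ?_
          rw [ih _ (hr2 j), Finset.mul_sum]
          refine Finset.sum_congr rfl fun l _ => ?_
          rw [mul_pow]; ring
      _ = ∑ j : Fin (k-1),
            (X j * X j) ^ (2^i) * g (r - ((j:ℤ)+2) * 2^i - ((j:ℤ)+2) * 2^i) := by
          refine sum_sum_char2 h2 _ fun j l => ?_
          rw [mul_comm (X j) (X l),
            show r - ((j:ℤ)+2) * 2^i - ((l:ℤ)+2) * 2^i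
               = r - ((l:ℤ)+2) * 2^i - ((j:ℤ)+2) * 2^i from by ring]
      _ = ∑ j : Fin (k-1), X j ^ (2^(i+1)) * g (r - ((j:ℤ)+2) * 2^(i+1)) := by
          refine Finset.sum_congr rfl fun j _ => ?_
          rw [← sq, ← pow_mul, show 2 * 2^i = 2^(i+1) from by rw [pow_succ, Nat.mul_comm]]
          congr 2
          rw [hpow]; ring
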